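/- Let λ > 0 and set g(λ) = (1 − e^{−λ})/λ. For every probability measure ρ on ℝ that is a finite convex combination of Dirac measures and satisfies 0 < ∫ x dρ < ∞, there exists a sequence (ρ_n) of probability measures on ℝ, each a finite convex combination of Dirac measures with 0 < ∫ x dρ_n < ∞, such that ρ_n → ρ vaguely (i.e. ∫ φ dρ_n → ∫ φ dρ for every continuous compactly supported φ : ℝ → ℝ) while A(ρ_n) does not converge vaguely to A(ρ); in fact one may take ρ_n = (n/(n+1))·ρ + (1/(n+1))·δ_{n²}, for which A(ρ_n) converges vaguely to (1 − g(λ))·ρ ≠ A(ρ). Hence A is discontinuous at every point of the set of finite point-mass probability measures with nonzero mean. -/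

import Mathlib

open MeasureTheory Filter

/-- The retardation factor `g(λ) = (1 - e^{-λ})/λ` (with the convention `g(0) = 1`). -/
noncomputable def gFactor (l : ℝ) : ℝ := if l = 0 then 1 else (1 - Real.exp (-l)) / l

/-- The selection update operator: `A(ρ)` is the measure with density
`x ↦ 1 - g(λ) + g(λ)·x/x̄` with respect to `ρ`, where `x̄ = ∫ x dρ`. -/
noncomputable def updateA (l : ℝ) (ρ : Measure ℝ) : Measure ℝ :=
  ρ.withDensity (fun x =>
    ENNReal.ofReal (1 - gFactor l + gFactor l * x / ∫ y, y ∂ρ))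

/-- A finite convex combination of Dirac measures. -/
def IsFinitePointMass (ρ : Measure ℝ) : Prop :=
  ∃ (m : ℕ) (a : Fin m → ℝ) (x : Fin m → ℝ),
    (∀ k, 0 ≤ a k) ∧ (∑ k, a k = 1) ∧
    ρ = ∑ k, ENNReal.ofReal (a k) • Measure.dirac (x k)

/-- Vague convergence: convergence of the integrals against every continuous
compactly supported test function. -/
def VagueTendsto (ρs : ℕ → Measure ℝ) (ρ : Measure ℝ) : Prop :=
  ∀ φ : ℝ → ℝ, Continuous φ → HasCompactSupport φ →
    Tendsto (fun n => ∫ x, φ x ∂(ρs n)) atTop (nhds (∫ x, φ x ∂ρ))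

lemma aux_integrable_dirac (φ : ℝ → ℝ) (x : ℝ) : Integrable φ (Measure.dirac x) := by
  have h : φ =ᵐ[Measure.dirac x] fun _ => φ x := by
    rw [MeasureTheory.ae_dirac_eq]; exact Filter.eventually_pure.2 rfl
  exact (integrable_const (φ x)).congr h.symm

lemma aux_integrable_pm {m : ℕ} (a x : Fin m → ℝ) (φ : ℝ → ℝ) :
    Integrable φ (∑ k, ENNReal.ofReal (a k) • Measure.dirac (x k)) :=
  integrable_finset_sum_measure.2 fun k _ =>
    (aux_integrable_dirac φ (x k)).smul_measure ENNReal.ofReal_ne_top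

lemma aux_integral_pm {m : ℕ} (a x : Fin m → ℝ) (ha : ∀ k, 0 ≤ a k) (φ : ℝ → ℝ) :
    ∫ y, φ y ∂(∑ k, ENNReal.ofReal (a k) • Measure.dirac (x k)) = ∑ k, a k * φ (x k) := by
  rw [integral_finset_sum_measure fun k _ =>
    (aux_integrable_dirac φ (x k)).smul_measure ENNReal.ofReal_ne_top]
  refine Finset.sum_congr rfl fun k _ => ?_
  rw [integral_smul_measure, integral_dirac, ENNReal.toReal_ofReal (ha k), smul_eq_mul]

lemma aux_withDensity_dirac (f : ℝ → ENNReal) (hf : Measurable f) (x : ℝ) :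
    (Measure.dirac x).withDensity f = f x • Measure.dirac x := by
  ext s hs
  classical
  rw [withDensity_apply _ hs, setLIntegral_dirac' hf hs, Measure.smul_apply, smul_eq_mul,
    Measure.dirac_apply' _ hs]
  by_cases h : x ∈ s <;> simp [h]

lemma aux_withDensity_pm {m : ℕ} (a x : Fin m → ℝ) (ha : ∀ k, 0 ≤ a k)
    (f : ℝ → ℝ) (hf : Measurable f) :
    (∑ k, ENNReal.ofReal (a k) • Measure.dirac (x k)).withDensity
        (fun y => ENNReal.ofReal (f y))
      = ∑ k, ENNReal.ofReal (a k * max (f (x k)) 0) • Measure.dirac (x k) := by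
  have hmf : Measurable fun y => ENNReal.ofReal (f y) := ENNReal.measurable_ofReal.comp hf
  induction m with
  | zero => simp
  | succ m ih =>
    rw [Fin.sum_univ_succ, Fin.sum_univ_succ, withDensity_add_measure,
      withDensity_smul_measure, aux_withDensity_dirac _ hmf,
      ih (fun k => a k.succ) (fun k => x k.succ) (fun k => ha k.succ)]
    congr 1
    have h0 : ENNReal.ofReal (f (x 0)) = ENNReal.ofReal (max (f (x 0)) 0) := by
      rcases le_total (f (x 0)) 0 with h | h
      · simp [ENNReal.ofReal_eq_zero.2 h, max_eq_right h]
      · rw [max_eq_left h]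
    rw [smul_smul, h0, ← ENNReal.ofReal_mul (ha 0)]

lemma aux_pm_apply_univ {m : ℕ} (a x : Fin m → ℝ) (ha : ∀ k, 0 ≤ a k) :
    (∑ k, ENNReal.ofReal (a k) • Measure.dirac (x k)) Set.univ = ENNReal.ofReal (∑ k, a k) := by
  rw [Measure.finset_sum_apply, ENNReal.ofReal_sum_of_nonneg (fun k _ => ha k)]
  refine Finset.sum_congr rfl fun k _ => ?_
  simp [Measure.smul_apply]

theorem discontinuity_of_update_operator
    (l : ℝ) (hl : 0 < l)
    (ρ : Measure ℝ) (hρ : IsProbabilityMeasure ρ)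
    (hpm : IsFinitePointMass ρ)
    (hmean : 0 < ∫ x, x ∂ρ) :
    ∃ ρs : ℕ → Measure ℝ,
      (∀ n, IsProbabilityMeasure (ρs n)) ∧
      (∀ n, IsFinitePointMass (ρs n)) ∧
      (∀ n, 0 < ∫ x, x ∂(ρs n)) ∧
      (∀ n : ℕ, 1 ≤ n →
        ρs n = ENNReal.ofReal ((n : ℝ) / ((n : ℝ) + 1)) • ρ
          + ENNReal.ofReal (1 / ((n : ℝ) + 1)) • Measure.dirac ((n : ℝ) ^ 2)) ∧
      VagueTendsto ρs ρ ∧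
      VagueTendsto (fun n => updateA l (ρs n))
        (ENNReal.ofReal (1 - gFactor l) • ρ) ∧
      ENNReal.ofReal (1 - gFactor l) • ρ ≠ updateA l ρ ∧
      ¬ VagueTendsto (fun n => updateA l (ρs n)) (updateA l ρ) := by
  classical
  obtain ⟨m, a, x, ha, hsa, hrep⟩ := hpm
  -- facts about gFactor
  have hg0 : 0 < gFactor l := by
    rw [gFactor, if_neg (ne_of_gt hl)]
    have : Real.exp (-l) < 1 := Real.exp_lt_one_iff.2 (by linarith)
    exact div_pos (by linarith) hl
  have hg1 : gFactor l < 1 := by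
    rw [gFactor, if_neg (ne_of_gt hl)]
    rw [div_lt_one hl]
    have := Real.add_one_lt_exp (x := -l) (by linarith)
    linarith
  set M := ∫ y, y ∂ρ with hM
  have hMpos : 0 < M := hmean
  have hMne : M ≠ 0 := ne_of_gt hMpos
  have hIρ : ∀ φ : ℝ → ℝ, Integrable φ ρ := fun φ => by
    rw [hrep]; exact aux_integrable_pm a x φ
  have hMsum : M = ∑ k, a k * x k := by
    rw [hM, hrep]; exact aux_integral_pm a x ha fun y => y
  set ρs : ℕ → Measure ℝ := fun n =>
    if n = 0 then ρ else
      ENNReal.ofReal ((n : ℝ) / ((n : ℝ) + 1)) • ρ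
        + ENNReal.ofReal (1 / ((n : ℝ) + 1)) • Measure.dirac ((n : ℝ) ^ 2) with hρsdef
  have hnp : ∀ n : ℕ, (0:ℝ) < (n:ℝ) + 1 := fun n => by positivity
  have hcn : ∀ n : ℕ, (0:ℝ) ≤ (n:ℝ) / ((n:ℝ) + 1) := fun n => by positivity
  have hdn : ∀ n : ℕ, (0:ℝ) ≤ 1 / ((n:ℝ) + 1) := fun n => by positivity
  have hρs_eq : ∀ n : ℕ, 1 ≤ n →
      ρs n = ENNReal.ofReal ((n : ℝ) / ((n : ℝ) + 1)) • ρ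
        + ENNReal.ofReal (1 / ((n : ℝ) + 1)) • Measure.dirac ((n : ℝ) ^ 2) := by
    intro n hn
    simp only [hρsdef, if_neg (Nat.one_le_iff_ne_zero.mp hn)]
  have hρs0 : ρs 0 = ρ := by simp only [hρsdef, if_pos rfl]
  -- integral of an arbitrary function against ρs n
  have hInt_n : ∀ n : ℕ, 1 ≤ n → ∀ φ : ℝ → ℝ,
      ∫ y, φ y ∂(ρs n)
        = ((n:ℝ) / ((n:ℝ) + 1)) * ∫ y, φ y ∂ρ + (1 / ((n:ℝ) + 1)) * φ ((n:ℝ) ^ 2) := by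
    intro n hn φ
    rw [hρs_eq n hn,
      integral_add_measure ((hIρ φ).smul_measure ENNReal.ofReal_ne_top)
        ((aux_integrable_dirac φ _).smul_measure ENNReal.ofReal_ne_top),
      integral_smul_measure, integral_smul_measure, integral_dirac,
      ENNReal.toReal_ofReal (hcn n), ENNReal.toReal_ofReal (hdn n), smul_eq_mul, smul_eq_mul]
  set X : ℕ → ℝ := fun n => ((n:ℝ) / ((n:ℝ) + 1)) * M + (1 / ((n:ℝ) + 1)) * (n:ℝ) ^ 2
    with hXdef
  set A' : ℕ → Fin (m + 1) → ℝ := fun n =>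
    Fin.cons (1 / ((n:ℝ) + 1)) (fun k => ((n:ℝ) / ((n:ℝ) + 1)) * a k) with hA'
  set x' : ℕ → Fin (m + 1) → ℝ := fun n => Fin.cons ((n:ℝ) ^ 2) x with hx'
  have hmean_n : ∀ n : ℕ, 1 ≤ n → ∫ y, y ∂(ρs n) = X n := fun n hn =>
    hInt_n n hn (fun y => y)
  have hXpos : ∀ n : ℕ, 1 ≤ n → 0 < X n := by
    intro n hn
    have h1 : (1:ℝ) ≤ (n:ℝ) := by exact_mod_cast hn
    have : 0 < ((n:ℝ) / ((n:ℝ) + 1)) * M :=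
      mul_pos (div_pos (by linarith) (hnp n)) hMpos
    have h2 : 0 ≤ (1 / ((n:ℝ) + 1)) * (n:ℝ) ^ 2 := by positivity
    simp only [hXdef]
    linarith
  have hXtop : Tendsto X atTop atTop := by
    have hbase : Tendsto (fun n : ℕ => (n:ℝ) - 1) atTop atTop := by
      simpa [sub_eq_add_neg] using
        tendsto_atTop_add_const_right atTop (-1 : ℝ) tendsto_natCast_atTop_atTop
    refine tendsto_atTop_mono' atTop ?_ hbase
    filter_upwards [eventually_ge_atTop 1] with n hn
    have h1 : (1:ℝ) ≤ (n:ℝ) := by exact_mod_cast hn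
    have h2 : 0 ≤ ((n:ℝ) / ((n:ℝ) + 1)) * M := mul_nonneg (hcn n) hMpos.le
    have h3 : ((n:ℝ) - 1) ≤ (1 / ((n:ℝ) + 1)) * (n:ℝ) ^ 2 := by
      rw [one_div, inv_mul_eq_div, le_div_iff₀ (hnp n)]
      nlinarith
    simp only [hXdef]
    linarith
  have hXinv : Tendsto (fun n : ℕ => (X n)⁻¹) atTop (nhds 0) := hXtop.inv_tendsto_atTop
  -- point-mass representation of ρs n
  have hrep_n : ∀ n : ℕ, 1 ≤ n →
      ρs n = ∑ k : Fin (m + 1),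
        ENNReal.ofReal (A' n k) • Measure.dirac (x' n k) := by
    intro n hn
    rw [hρs_eq n hn, Fin.sum_univ_succ]
    simp only [hA', hx', Fin.cons_zero, Fin.cons_succ]
    rw [add_comm]
    congr 1
    rw [hrep, Finset.smul_sum]
    refine Finset.sum_congr rfl fun k _ => ?_
    rw [smul_smul, ← ENNReal.ofReal_mul (hcn n)]
  have hconsnn : ∀ n : ℕ, ∀ k : Fin (m + 1), 0 ≤ A' n k := by
    intro n k
    refine Fin.cases ?_ ?_ k
    · simpa [hA'] using hdn n
    · intro i; simpa [hA'] using mul_nonneg (hcn n) (ha i)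
  -- integral against updateA of ρs n
  have hA_int : ∀ n : ℕ, 1 ≤ n → ∀ φ : ℝ → ℝ,
      ∫ y, φ y ∂(updateA l (ρs n))
        = ((1 / ((n:ℝ) + 1)) * max (1 - gFactor l + gFactor l * (n:ℝ) ^ 2 / X n) 0)
              * φ ((n:ℝ) ^ 2)
          + ∑ k : Fin m,
              ((((n:ℝ) / ((n:ℝ) + 1)) * a k) * max (1 - gFactor l + gFactor l * x k / X n) 0)
                * φ (x k) := by
    intro n hn φ
    have hf : Measurable fun y : ℝ => 1 - gFactor l + gFactor l * y / X n := by fun_prop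
    have key : updateA l (ρs n)
        = ∑ k : Fin (m + 1),
            ENNReal.ofReal
                (A' n k * max (1 - gFactor l + gFactor l * (x' n k) / X n) 0) •
              Measure.dirac (x' n k) := by
      unfold updateA
      rw [hmean_n n hn, hrep_n n hn]
      exact aux_withDensity_pm _ _ (hconsnn n) _ hf
    calc ∫ y, φ y ∂(updateA l (ρs n))
        = ∑ k : Fin (m + 1),
            (A' n k * max (1 - gFactor l + gFactor l * (x' n k) / X n) 0)
              * φ (x' n k) := by
          rw [key]
          exact aux_integral_pm _ _
            (fun k => mul_nonneg (hconsnn n k) (le_max_right _ _)) φ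
      _ = _ := by
          rw [Fin.sum_univ_succ]
          simp only [hA', hx', Fin.cons_zero, Fin.cons_succ]
  -- tendsto of the coefficients
  have hcn_t : Tendsto (fun n : ℕ => (n:ℝ) / ((n:ℝ) + 1)) atTop (nhds 1) := by
    have h := tendsto_one_div_add_atTop_nhds_zero_nat (𝕜 := ℝ)
    have h2 : Tendsto (fun n : ℕ => 1 - 1 / ((n:ℝ) + 1)) atTop (nhds (1 - 0)) :=
      tendsto_const_nhds.sub h
    rw [sub_zero] at h2
    refine h2.congr fun n => ?_
    field_simp
    ring
  -- integral against the smul measure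
  have hsmul_int : ∀ φ : ℝ → ℝ,
      ∫ y, φ y ∂(ENNReal.ofReal (1 - gFactor l) • ρ) = (1 - gFactor l) * ∫ y, φ y ∂ρ := by
    intro φ
    rw [integral_smul_measure, ENNReal.toReal_ofReal (by linarith), smul_eq_mul]
  have hρint : ∀ φ : ℝ → ℝ, ∫ y, φ y ∂ρ = ∑ k, a k * φ (x k) := by
    intro φ; rw [hrep]; exact aux_integral_pm a x ha φ
  -- Vague convergence ρs → ρ
  have hvague1 : VagueTendsto ρs ρ := by
    intro φ hφc hφs
    have hbd : Bornology.IsBounded (tsupport φ) := by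
      have hcpt : IsCompact (tsupport φ) := hφs
      exact hcpt.isBounded
    obtain ⟨r, hr⟩ := hbd.subset_closedBall 0
    have hev : (fun n : ℕ => ((n:ℝ) / ((n:ℝ) + 1)) * ∫ y, φ y ∂ρ)
        =ᶠ[atTop] fun n => ∫ y, φ y ∂(ρs n) := by
      filter_upwards [eventually_ge_atTop 1,
        tendsto_natCast_atTop_atTop.eventually_gt_atTop r] with n hn hrn
      have h1 : (1:ℝ) ≤ (n:ℝ) := by exact_mod_cast hn
      have hφ0 : φ ((n:ℝ) ^ 2) = 0 := by
        apply image_eq_zero_of_notMem_tsupport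
        intro hmem
        have h2 := hr hmem
        rw [Metric.mem_closedBall, Real.dist_eq, sub_zero] at h2
        have h3 : |(n:ℝ) ^ 2| = (n:ℝ) ^ 2 := abs_of_nonneg (sq_nonneg _)
        nlinarith
      rw [hInt_n n hn φ, hφ0, mul_zero, add_zero]
    have hlim : Tendsto (fun n : ℕ => ((n:ℝ) / ((n:ℝ) + 1)) * ∫ y, φ y ∂ρ) atTop
        (nhds (1 * ∫ y, φ y ∂ρ)) := hcn_t.mul_const _
    rw [one_mul] at hlim
    exact hlim.congr' hev
  -- Vague convergence updateA (ρs n) → (1 - g) • ρ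
  have hvague2 : VagueTendsto (fun n => updateA l (ρs n))
      (ENNReal.ofReal (1 - gFactor l) • ρ) := by
    intro φ hφc hφs
    have hbd : Bornology.IsBounded (tsupport φ) := by
      have hcpt : IsCompact (tsupport φ) := hφs
      exact hcpt.isBounded
    obtain ⟨r, hr⟩ := hbd.subset_closedBall 0
    have hev : (fun n : ℕ => ∑ k : Fin m,
          ((((n:ℝ) / ((n:ℝ) + 1)) * a k) * max (1 - gFactor l + gFactor l * x k / X n) 0)
            * φ (x k))
        =ᶠ[atTop] fun n => ∫ y, φ y ∂(updateA l (ρs n)) := by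
      filter_upwards [eventually_ge_atTop 1,
        tendsto_natCast_atTop_atTop.eventually_gt_atTop r] with n hn hrn
      have h1 : (1:ℝ) ≤ (n:ℝ) := by exact_mod_cast hn
      have hφ0 : φ ((n:ℝ) ^ 2) = 0 := by
        apply image_eq_zero_of_notMem_tsupport
        intro hmem
        have h2 := hr hmem
        rw [Metric.mem_closedBall, Real.dist_eq, sub_zero] at h2
        have h3 : |(n:ℝ) ^ 2| = (n:ℝ) ^ 2 := abs_of_nonneg (sq_nonneg _)
        nlinarith
      rw [hA_int n hn φ, hφ0, mul_zero, zero_add]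
    have hlim : Tendsto (fun n : ℕ => ∑ k : Fin m,
        ((((n:ℝ) / ((n:ℝ) + 1)) * a k) * max (1 - gFactor l + gFactor l * x k / X n) 0)
          * φ (x k)) atTop
        (nhds (∑ k : Fin m, ((1 * a k) * max (1 - gFactor l) 0) * φ (x k))) := by
      refine tendsto_finset_sum _ fun k _ => ?_
      have hd : Tendsto (fun n : ℕ => gFactor l * x k / X n) atTop (nhds 0) := by
        have h2 := hXinv.const_mul (gFactor l * x k)
        rw [mul_zero] at h2
        refine h2.congr fun n => ?_
        rw [div_eq_mul_inv]
      have hin : Tendsto (fun n : ℕ => 1 - gFactor l + gFactor l * x k / X n) atTop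
          (nhds (1 - gFactor l)) := by
        have h2 : Tendsto (fun n : ℕ => (1 - gFactor l) + gFactor l * x k / X n) atTop
            (nhds ((1 - gFactor l) + 0)) := tendsto_const_nhds.add hd
        rwa [add_zero] at h2
      exact (((hcn_t.mul_const (a k)).mul (hin.max tendsto_const_nhds)).mul_const (φ (x k)))
    have htarget : ∫ y, φ y ∂(ENNReal.ofReal (1 - gFactor l) • ρ)
        = ∑ k : Fin m, ((1 * a k) * max (1 - gFactor l) 0) * φ (x k) := by
      rw [hsmul_int φ, hρint φ, Finset.mul_sum]
      refine Finset.sum_congr rfl fun k _ => ?_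
      rw [max_eq_left (by linarith : (0:ℝ) ≤ 1 - gFactor l)]
      ring
    rw [htarget]
    exact hlim.congr' hev
  -- the update of ρ itself
  have hAρ : updateA l ρ
      = ∑ k, ENNReal.ofReal (a k * max (1 - gFactor l + gFactor l * x k / M) 0) •
          Measure.dirac (x k) := by
    have hf : Measurable fun y : ℝ => 1 - gFactor l + gFactor l * y / M := by fun_prop
    unfold updateA
    rw [← hM, hrep]
    exact aux_withDensity_pm a x ha _ hf
  have hS1 : ∑ k, a k * (1 - gFactor l + gFactor l * x k / M) = 1 := by
    have hterm : ∀ k : Fin m, a k * (1 - gFactor l + gFactor l * x k / M)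
        = (1 - gFactor l) * a k + (gFactor l / M) * (a k * x k) := fun k => by ring
    rw [Finset.sum_congr rfl fun k _ => hterm k, Finset.sum_add_distrib,
      ← Finset.mul_sum, ← Finset.mul_sum, hsa, ← hMsum, mul_one,
      div_mul_cancel₀ _ hMne]
    ring
  have hSge : 1 ≤ ∑ k, a k * max (1 - gFactor l + gFactor l * x k / M) 0 := by
    calc (1:ℝ) = ∑ k, a k * (1 - gFactor l + gFactor l * x k / M) := hS1.symm
      _ ≤ ∑ k, a k * max (1 - gFactor l + gFactor l * x k / M) 0 :=
        Finset.sum_le_sum fun k _ =>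
          mul_le_mul_of_nonneg_left (le_max_left _ _) (ha k)
  have hne : ENNReal.ofReal (1 - gFactor l) • ρ ≠ updateA l ρ := by
    intro h
    have h2 := congrArg (fun μ : Measure ℝ => μ Set.univ) h
    simp only [Measure.smul_apply, smul_eq_mul] at h2
    rw [measure_univ, mul_one, hAρ,
      aux_pm_apply_univ _ _ (fun k => mul_nonneg (ha k) (le_max_right _ _))] at h2
    have h3 : ENNReal.ofReal (1 - gFactor l) < 1 := by
      rw [← ENNReal.ofReal_one]
      exact (ENNReal.ofReal_lt_ofReal_iff zero_lt_one).2 (by linarith)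
    have h4 : (1 : ENNReal) ≤ ENNReal.ofReal
        (∑ k, a k * max (1 - gFactor l + gFactor l * x k / M) 0) := by
      rw [← ENNReal.ofReal_one]
      exact ENNReal.ofReal_le_ofReal hSge
    rw [h2] at h3
    exact absurd h3 (not_lt.2 h4)
  -- failure of convergence to updateA ρ
  have hnot : ¬ VagueTendsto (fun n => updateA l (ρs n)) (updateA l ρ) := by
    intro H
    set R : ℝ := ∑ k, |x k| with hR
    have hR0 : 0 ≤ R := Finset.sum_nonneg fun k _ => abs_nonneg _
    set φ : ℝ → ℝ := fun y => max 0 (min 1 (R + 1 - |y|)) with hφdef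
    have hφc : Continuous φ :=
      continuous_const.max (continuous_const.min (continuous_const.sub continuous_abs))
    have hφs : HasCompactSupport φ := by
      apply HasCompactSupport.intro (isCompact_Icc (a := -(R + 1)) (b := R + 1))
      intro y hy
      have hgt : R + 1 < |y| := by
        by_contra hc
        push_neg at hc
        exact hy (Set.mem_Icc.2 (abs_le.mp hc))
      simp only [hφdef]
      rw [max_eq_left]
      exact le_trans (min_le_right _ _) (by linarith)
    have hφ1 : ∀ k : Fin m, φ (x k) = 1 := by
      intro k
      have hxk : |x k| ≤ R :=
        Finset.single_le_sum (fun j (_ : j ∈ Finset.univ) => abs_nonneg (x j))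
          (Finset.mem_univ k)
      simp only [hφdef]
      rw [min_eq_left (by linarith), max_eq_right zero_le_one]
    have heq := tendsto_nhds_unique (H φ hφc hφs) (hvague2 φ hφc hφs)
    have hLHS : ∫ y, φ y ∂(updateA l ρ)
        = ∑ k, a k * max (1 - gFactor l + gFactor l * x k / M) 0 := by
      rw [hAρ, aux_integral_pm _ _ (fun k => mul_nonneg (ha k) (le_max_right _ _)) φ]
      exact Finset.sum_congr rfl fun k _ => by rw [hφ1 k, mul_one]
    have hRHS : ∫ y, φ y ∂(ENNReal.ofReal (1 - gFactor l) • ρ) = 1 - gFactor l := by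
      rw [hsmul_int φ, hρint φ]
      have : ∑ k, a k * φ (x k) = 1 := by
        rw [← hsa]
        exact Finset.sum_congr rfl fun k _ => by rw [hφ1 k, mul_one]
      rw [this, mul_one]
    rw [hLHS, hRHS] at heq
    linarith
  -- probability measures
  have hprob : ∀ n, IsProbabilityMeasure (ρs n) := by
    intro n
    rcases Nat.eq_zero_or_pos n with h0 | h1
    · rw [h0, hρs0]; exact hρ
    · constructor
      rw [hρs_eq n h1]
      have hsum1 : (n:ℝ) / ((n:ℝ) + 1) + 1 / ((n:ℝ) + 1) = 1 := by
        field_simp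
      rw [Measure.add_apply, Measure.smul_apply, Measure.smul_apply, measure_univ,
        measure_univ, smul_eq_mul, smul_eq_mul, mul_one, mul_one,
        ← ENNReal.ofReal_add (hcn n) (hdn n), hsum1, ENNReal.ofReal_one]
  -- finite point masses
  have hfpm : ∀ n, IsFinitePointMass (ρs n) := by
    intro n
    rcases Nat.eq_zero_or_pos n with h0 | h1
    · exact ⟨m, a, x, ha, hsa, by rw [h0, hρs0]; exact hrep⟩
    · refine ⟨m + 1, A' n, x' n, hconsnn n, ?_, hrep_n n h1⟩
      simp only [hA']
      rw [Fin.sum_cons, ← Finset.mul_sum, hsa, mul_one]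
      field_simp
      ring
  -- positive means
  have hpos : ∀ n, 0 < ∫ y, y ∂(ρs n) := by
    intro n
    rcases Nat.eq_zero_or_pos n with h0 | h1
    · rw [h0, hρs0]; exact hmean
    · rw [hmean_n n h1]; exact hXpos n h1
  exact ⟨ρs, hprob, hfpm, hpos, hρs_eq, hvague1, hvague2, hne, hnot⟩
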